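/- For every prime p not dividing 44, the number of points (including the point at infinity) on the elliptic curve y² = x³ + x² + 3x - 1 over the field with p elements is divisible by 3. -/

import Mathlib

open WeierstrassCurve WeierstrassCurve.Affine

noncomputable section

/-- The elliptic curve `y² = x³ + x² + 3x - 1` over `ZMod p`. -/
def Wc (p : ℕ) : WeierstrassCurve.Affine (ZMod p) := ⟨0, 1, 0, 3, -1⟩

theorem stmt_8 (p : ℕ) (hp : p.Prime) (h : ¬ (p ∣ 44)) :
    3 ∣ Nat.card {P : ZMod p × ZMod p //
      P.2 ^ 2 = P.1 ^ 3 + P.1 ^ 2 + 3 * P.1 - 1} + 1 := by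
  haveI : Fact p.Prime := ⟨hp⟩
  haveI : NeZero p := ⟨hp.ne_zero⟩
  have hp2 : p ≠ 2 := fun hh => h (hh ▸ ⟨22, rfl⟩)
  have hp11 : p ≠ 11 := fun hh => h (hh ▸ ⟨4, rfl⟩)
  have h2 : (2 : ZMod p) ≠ 0 := by
    have : ((2 : ℕ) : ZMod p) ≠ 0 := by
      rw [Ne, ZMod.natCast_eq_zero_iff]
      exact fun hd => hp2 ((Nat.prime_dvd_prime_iff_eq hp Nat.prime_two).mp hd)
    simpa using this
  have h11 : (11 : ZMod p) ≠ 0 := by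
    have : ((11 : ℕ) : ZMod p) ≠ 0 := by
      rw [Ne, ZMod.natCast_eq_zero_iff]
      exact fun hd => hp11 ((Nat.prime_dvd_prime_iff_eq hp (by norm_num)).mp hd)
    simpa using this
  have hΔ : (Wc p).Δ ≠ 0 := by
    have hval : (Wc p).Δ = -(2 ^ 8 * 11) := by
      simp [Wc, WeierstrassCurve.Δ, WeierstrassCurve.b₂, WeierstrassCurve.b₄,
        WeierstrassCurve.b₆, WeierstrassCurve.b₈]
      ring
    rw [hval, neg_ne_zero]
    exact mul_ne_zero (pow_ne_zero _ h2) h11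
  have hEq : ∀ x y : ZMod p, (Wc p).Equation x y ↔
      y ^ 2 = x ^ 3 + x ^ 2 + 3 * x - 1 := by
    intro x y
    rw [WeierstrassCurve.Affine.equation_iff]
    simp only [Wc]
    constructor <;> intro hh <;> linear_combination hh
  -- the point (1, 2) is on the curve
  have heq : (Wc p).Equation 1 2 := (hEq 1 2).mpr (by ring)
  have hns : (Wc p).Nonsingular 1 2 := ((Wc p).equation_iff_nonsingular_of_Δ_ne_zero hΔ).mp heq
  set P : (Wc p).Point := Point.some _ _ hns with hP
  have hneg : (Wc p).negY 1 2 = -2 := by simp [Wc]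
  have h4 : (2 : ZMod p) - -2 ≠ 0 := by
    intro hh
    apply h2
    have : (2 : ZMod p) * 2 = 0 := by linear_combination hh
    rcases mul_eq_zero.mp this with h' | h' <;> exact h'
  have hy : (2 : ZMod p) ≠ (Wc p).negY 1 2 := by
    rw [hneg]
    intro hh
    exact h4 (by linear_combination hh)
  -- the slope of the tangent line at (1, 2) is 2
  have hL : (Wc p).slope 1 1 2 2 = 2 := by
    rw [slope_of_Y_ne rfl hy, hneg]
    simp only [Wc]
    rw [div_eq_iff h4]
    ring
  have hx3 : (Wc p).addX 1 1 ((Wc p).slope 1 1 2 2) = 1 := by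
    rw [WeierstrassCurve.Affine.addX, hL]
    simp only [Wc]
    ring
  have hy3 : (Wc p).addY 1 1 2 ((Wc p).slope 1 1 2 2) = -2 := by
    rw [WeierstrassCurve.Affine.addY, WeierstrassCurve.Affine.negAddY, hx3, hL]
    simp only [Wc, WeierstrassCurve.Affine.negY]
    ring
  -- P + P + P = 0
  have h3P : P + P + P = 0 := by
    rw [hP, Point.add_self_of_Y_ne hy]
    exact Point.add_of_Y_eq hx3 (by rw [hy3, hneg])
  have h3smul : (3 : ℕ) • P = 0 := by
    rw [show (3 : ℕ) = 2 + 1 from rfl, add_nsmul, two_nsmul, one_nsmul, h3P]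
  have hdvd : addOrderOf P ∣ 3 := addOrderOf_dvd_of_nsmul_eq_zero h3smul
  have hPne : P ≠ 0 := Point.some_ne_zero hns
  have hord : addOrderOf P = 3 := by
    rcases (Nat.prime_three.eq_one_or_self_of_dvd _ hdvd) with h1 | h1
    · exact absurd (AddMonoid.addOrderOf_eq_one_iff.mp h1) hPne
    · exact h1
  have hcard : addOrderOf P ∣ Nat.card (Wc p).Point := addOrderOf_dvd_natCard P
  -- the points of the curve are in bijection with `Option` of the affine solutions
  let e : (Wc p).Point ≃ Option {P : ZMod p × ZMod p //
      P.2 ^ 2 = P.1 ^ 3 + P.1 ^ 2 + 3 * P.1 - 1} :=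
    { toFun := fun Q => match Q with
        | .zero => none
        | @Point.some _ _ _ x y hQ => some ⟨(x, y), (hEq x y).mp hQ.1⟩
      invFun := fun o => match o with
        | none => .zero
        | some ⟨(x, y), hxy⟩ => .some _ _ (((Wc p).equation_iff_nonsingular_of_Δ_ne_zero hΔ).mp ((hEq x y).mpr hxy))
      left_inv := by rintro (_ | _) <;> rfl
      right_inv := by rintro (_ | ⟨⟨x, y⟩, hxy⟩) <;> rfl }
  haveI : Fintype {P : ZMod p × ZMod p //
      P.2 ^ 2 = P.1 ^ 3 + P.1 ^ 2 + 3 * P.1 - 1} := by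
    classical exact Subtype.fintype _
  have hcount : Nat.card (Wc p).Point = Nat.card {P : ZMod p × ZMod p //
      P.2 ^ 2 = P.1 ^ 3 + P.1 ^ 2 + 3 * P.1 - 1} + 1 := by
    rw [Nat.card_congr e, Nat.card_eq_fintype_card, Nat.card_eq_fintype_card,
      Fintype.card_option]
  rw [← hcount]
  exact hord ▸ hcard

end
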